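/- If the maximizer p* of the likelihood L over the simplex Δ has all coordinates positive (p*_j > 0 for every j), then for every starting point p_0 in the open simplex Δ°, the EM iterates p_{n+1} = T(p_n) converge to p* as n → ∞. -/

import Mathlib

open Finset Filter Real

lemma jensen_log {κ : Type*} [Fintype κ] (t x : κ → ℝ)
    (ht : ∀ a, 0 ≤ t a) (ht1 : ∑ a, t a = 1) (hx : ∀ a, 0 < x a) :
    ∑ a, t a * Real.log (x a) ≤ Real.log (∑ a, t a * x a) := by
  have h := strictConcaveOn_log_Ioi.concaveOn.le_map_sum
    (t := Finset.univ) (w := t) (p := x) (fun a _ => ht a) ht1 (fun a _ => hx a)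
  simpa [smul_eq_mul] using h

lemma kl_pos {h : ℕ} (p q : Fin h → ℝ) (hp : ∀ j, 0 < p j) (hq : ∀ j, 0 < q j)
    (hp1 : ∑ j, p j = 1) (hq1 : ∑ j, q j = 1) (hne : p ≠ q) :
    0 < ∑ j, p j * Real.log (p j / q j) := by
  have key : ∑ j, p j * Real.log (q j / p j) < 0 := by
    have hlt : ∀ j, p j * Real.log (q j / p j) ≤ q j - p j := by
      intro j
      have := Real.log_le_sub_one_of_pos (div_pos (hq j) (hp j))
      have h2 : p j * Real.log (q j / p j) ≤ p j * (q j / p j - 1) :=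
        mul_le_mul_of_nonneg_left this (hp j).le
      calc p j * Real.log (q j / p j) ≤ p j * (q j / p j - 1) := h2
        _ = q j - p j := by
            have := (hp j).ne'
            field_simp
    obtain ⟨j0, hj0⟩ : ∃ j, p j ≠ q j := by
      by_contra hc; push_neg at hc; exact hne (funext hc)
    have hstrict : p j0 * Real.log (q j0 / p j0) < q j0 - p j0 := by
      have hne1 : q j0 / p j0 ≠ 1 := by
        intro hcon
        apply hj0
        have := (hp j0).ne'
        field_simp at hcon
        linarith
      have := Real.log_lt_sub_one_of_pos (div_pos (hq j0) (hp j0)) hne1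
      have h2 : p j0 * Real.log (q j0 / p j0) < p j0 * (q j0 / p j0 - 1) :=
        (mul_lt_mul_iff_right₀ (hp j0)).2 this
      calc p j0 * Real.log (q j0 / p j0) < p j0 * (q j0 / p j0 - 1) := h2
        _ = q j0 - p j0 := by
            have := (hp j0).ne'
            field_simp
    have hsum : ∑ j, p j * Real.log (q j / p j) < ∑ j, (q j - p j) :=
      Finset.sum_lt_sum (fun j _ => hlt j) ⟨j0, Finset.mem_univ _, hstrict⟩
    have : ∑ j, (q j - p j) = 0 := by rw [Finset.sum_sub_distrib, hp1, hq1]; ring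
    linarith
  have : ∑ j, p j * Real.log (p j / q j) = - ∑ j, p j * Real.log (q j / p j) := by
    rw [← Finset.sum_neg_distrib]
    refine Finset.sum_congr rfl fun j _ => ?_
    rw [← mul_neg, ← Real.log_inv, inv_div]
  linarith [key, this.ge]

lemma kl_nonneg {h : ℕ} (p q : Fin h → ℝ) (hp : ∀ j, 0 < p j) (hq : ∀ j, 0 < q j)
    (hp1 : ∑ j, p j = 1) (hq1 : ∑ j, q j = 1) :
    0 ≤ ∑ j, p j * Real.log (p j / q j) := by
  rcases eq_or_ne p q with rfl | hne
  · have h1 : ∀ j, p j / p j = 1 := fun j => div_self (hp j).ne'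
    simp [h1]
  · exact (kl_pos p q hp hq hp1 hq1 hne).le

theorem em_abstract {h : ℕ} {ι : Type*} [Fintype ι]
    (A : ι → Fin h → ℝ) (hA : ∀ a j, 0 ≤ A a j)
    (c : ι → ℕ) (M : ℕ) (hM : (M : ℝ) = ∑ a, (c a : ℝ)) (hM1 : 0 < M)
    (hApos : ∀ (p : Fin h → ℝ), (∀ j, 0 < p j) → ∀ a, 0 < ∑ i, A a i * p i)
    (hSpos : ∀ (p : Fin h → ℝ), (∀ j, 0 < p j) → ∀ j,
        0 < ∑ a, (c a : ℝ) * A a j / (∑ i, A a i * p i))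
    (T : (Fin h → ℝ) → (Fin h → ℝ))
    (hT : ∀ p : Fin h → ℝ, (∀ j, 0 < p j) → ∑ j, p j = 1 → ∀ j,
       T p j = (M : ℝ)⁻¹ * (p j * ∑ a, (c a : ℝ) * A a j / (∑ i, A a i * p i)))
    (L : (Fin h → ℝ) → ℝ)
    (hL : ∀ p, L p = ∏ a, (∑ i, A a i * p i) ^ c a)
    (hsep : ∀ q q' : Fin h → ℝ, (∀ j, 0 ≤ q j) → ∑ j, q j = 1 →
        (∀ j, 0 ≤ q' j) → ∑ j, q' j = 1 →
        (∀ a, c a ≠ 0 → (∑ i, A a i * q i) = (∑ i, A a i * q' i)) → q = q')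
    (pstar : Fin h → ℝ) (hps : ∀ j, 0 < pstar j) (hps1 : ∑ j, pstar j = 1)
    (hmax : ∀ q : Fin h → ℝ, (∀ j, 0 ≤ q j) → ∑ j, q j = 1 → L q ≤ L pstar)
    (p₀ : Fin h → ℝ) (hp₀ : ∀ j, 0 < p₀ j) (hp₀1 : ∑ j, p₀ j = 1) :
    Tendsto (fun N : ℕ => T^[N] p₀) atTop (nhds pstar) := by
  have hMR : (0 : ℝ) < M := by exact_mod_cast hM1
  set ℓ : ι → (Fin h → ℝ) → ℝ := fun a p => ∑ i, A a i * p i with hℓ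
  -- positivity of L
  have hLpos : ∀ p : Fin h → ℝ, (∀ j, 0 < p j) → 0 < L p := by
    intro p hp
    rw [hL]
    exact Finset.prod_pos fun a _ => pow_pos (hApos p hp a) _
  -- log L as a sum
  have hgl : ∀ p : Fin h → ℝ, (∀ j, 0 < p j) →
      Real.log (L p) = ∑ a, (c a : ℝ) * Real.log (ℓ a p) := by
    intro p hp
    rw [hL, Real.log_prod (fun a _ => (pow_pos (hApos p hp a) _).ne')]
    exact Finset.sum_congr rfl fun a _ => by rw [Real.log_pow]
  -- T preserves the open simplex
  have hstep : ∀ p : Fin h → ℝ, (∀ j, 0 < p j) → ∑ j, p j = 1 →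
      (∀ j, 0 < T p j) ∧ ∑ j, T p j = 1 := by
    intro p hp hp1
    constructor
    · intro j
      rw [hT p hp hp1 j]
      exact mul_pos (inv_pos.2 hMR) (mul_pos (hp j) (hSpos p hp j))
    · have : ∑ j, T p j = (M : ℝ)⁻¹ * ∑ j, ∑ a, (c a : ℝ) * A a j * p j / ℓ a p := by
        rw [Finset.mul_sum]
        refine Finset.sum_congr rfl fun j _ => ?_
        rw [hT p hp hp1 j]
        congr 1
        rw [Finset.mul_sum]
        exact Finset.sum_congr rfl fun a _ => by ring
      have hswap : ∑ j, ∑ a, (c a : ℝ) * A a j * p j / ℓ a p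
          = ∑ a, ∑ j, (c a : ℝ) * A a j * p j / ℓ a p := by
        exact Finset.sum_comm
      rw [this, hswap]
      have : ∀ a : ι, ∑ j, (c a : ℝ) * A a j * p j / ℓ a p = (c a : ℝ) := by
        intro a
        have h1 : ∑ j, (c a : ℝ) * A a j * p j / ℓ a p
            = ((c a : ℝ) / ℓ a p) * ∑ j, A a j * p j := by
          rw [Finset.mul_sum]
          refine Finset.sum_congr rfl fun j _ => ?_
          ring
        rw [h1, div_mul_eq_mul_div, mul_div_assoc, div_self (hApos p hp a).ne', mul_one]
      rw [Finset.sum_congr rfl fun a _ => this a, ← hM, inv_mul_cancel₀ hMR.ne']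
  -- ascent inequality with KL remainder
  have ascent : ∀ p : Fin h → ℝ, (∀ j, 0 < p j) → ∑ j, p j = 1 →
      Real.log (L p) + M * ∑ j, T p j * Real.log (T p j / p j) ≤ Real.log (L (T p)) := by
    intro p hp hp1
    have hst := hstep p hp hp1
    have hl : ∀ a, 0 < ℓ a p := hApos p hp
    have hl' : ∀ a, 0 < ℓ a (T p) := hApos (T p) hst.1
    have per : ∀ a : ι, ∑ j, (A a j * p j / ℓ a p) * Real.log (T p j / p j)
        ≤ Real.log (ℓ a (T p)) - Real.log (ℓ a p) := by
      intro a
      have hw : ∀ j, 0 ≤ A a j * p j / ℓ a p := fun j =>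
        div_nonneg (mul_nonneg (hA a j) (hp j).le) (hl a).le
      have hw1 : ∑ j, A a j * p j / ℓ a p = 1 := by
        rw [← Finset.sum_div]
        exact div_self (hl a).ne'
      have hx : ∀ j, 0 < T p j / p j := fun j => div_pos (hst.1 j) (hp j)
      have hj := jensen_log (fun j => A a j * p j / ℓ a p) (fun j => T p j / p j) hw hw1 hx
      have hsum : ∑ j, (A a j * p j / ℓ a p) * (T p j / p j) = ℓ a (T p) / ℓ a p := by
        simp only [hℓ]
        rw [eq_div_iff (hl a).ne', Finset.sum_mul]
        refine Finset.sum_congr rfl fun j _ => ?_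
        have h1 := (hp j).ne'
        have h2 := (hl a).ne'
        simp only [hℓ] at h2
        field_simp
        ring
      rw [hsum, Real.log_div (hl' a).ne' (hl a).ne'] at hj
      exact hj
    have big : ∑ a, (c a : ℝ) * ∑ j, (A a j * p j / ℓ a p) * Real.log (T p j / p j)
        ≤ ∑ a, (c a : ℝ) * (Real.log (ℓ a (T p)) - Real.log (ℓ a p)) :=
      Finset.sum_le_sum fun a _ => mul_le_mul_of_nonneg_left (per a) (Nat.cast_nonneg _)
    have hTj : ∀ j, p j * ∑ a, (c a : ℝ) * A a j / ℓ a p = M * T p j := by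
      intro j
      rw [hT p hp hp1 j]
      field_simp
      rfl
    have lhs : ∑ a, (c a : ℝ) * ∑ j, (A a j * p j / ℓ a p) * Real.log (T p j / p j)
        = M * ∑ j, T p j * Real.log (T p j / p j) := by
      have e1 : ∑ a, (c a : ℝ) * ∑ j, (A a j * p j / ℓ a p) * Real.log (T p j / p j)
          = ∑ a, ∑ j, (c a : ℝ) * ((A a j * p j / ℓ a p) * Real.log (T p j / p j)) := by
        exact Finset.sum_congr rfl fun a _ => Finset.mul_sum _ _ _
      have e2 : ∑ a, ∑ j, (c a : ℝ) * ((A a j * p j / ℓ a p) * Real.log (T p j / p j))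
          = ∑ j, ∑ a, (c a : ℝ) * ((A a j * p j / ℓ a p) * Real.log (T p j / p j)) := by
        exact Finset.sum_comm
      have e3 : ∀ j, ∑ a, (c a : ℝ) * ((A a j * p j / ℓ a p) * Real.log (T p j / p j))
          = (p j * ∑ a, (c a : ℝ) * A a j / ℓ a p) * Real.log (T p j / p j) := by
        intro j
        rw [Finset.mul_sum, Finset.sum_mul]
        exact Finset.sum_congr rfl fun a _ => by ring
      rw [e1, e2, Finset.sum_congr rfl fun j _ => e3 j, Finset.mul_sum]
      exact Finset.sum_congr rfl fun j _ => by rw [hTj j]; ring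
    have rhs : ∑ a, (c a : ℝ) * (Real.log (ℓ a (T p)) - Real.log (ℓ a p))
        = Real.log (L (T p)) - Real.log (L p) := by
      rw [hgl p hp, hgl (T p) hst.1, ← Finset.sum_sub_distrib]
      exact Finset.sum_congr rfl fun a _ => by ring
    rw [lhs, rhs] at big
    linarith
  -- fixed point property
  have hfix : T pstar = pstar := by
    have hst := hstep pstar hps hps1
    have hle : Real.log (L (T pstar)) ≤ Real.log (L pstar) :=
      Real.log_le_log (hLpos _ hst.1) (hmax _ (fun j => (hst.1 j).le) hst.2)
    have ha := ascent pstar hps hps1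
    have hkl : ∑ j, T pstar j * Real.log (T pstar j / pstar j) ≤ 0 := by nlinarith
    by_contra hne
    exact absurd hkl (not_le.2 (kl_pos _ _ hst.1 hps hst.2 hps1 hne))
  -- key inequality
  have key : ∀ p : Fin h → ℝ, (∀ j, 0 < p j) → ∑ j, p j = 1 →
      Real.log (L pstar) - Real.log (L p) ≤
        M * ((∑ j, pstar j * Real.log (pstar j / p j))
           - ∑ j, pstar j * Real.log (pstar j / T p j)) := by
    intro p hp hp1
    have hst := hstep p hp hp1
    have hl : ∀ a, 0 < ℓ a p := hApos p hp
    have hls : ∀ a, 0 < ℓ a pstar := hApos pstar hps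
    -- from the fixed point property, the weights sum to 1
    have hfixj : ∀ j, ∑ a, (c a : ℝ) * A a j / ℓ a pstar / M = 1 := by
      intro j
      have h1 := hT pstar hps hps1 j
      rw [hfix] at h1
      have hS : ∑ a, (c a : ℝ) * A a j / ℓ a pstar = (M : ℝ) := by
        simp only [hℓ]
        have h4 : pstar j * ∑ a, (c a : ℝ) * A a j / (∑ i, A a i * pstar i)
            = (M : ℝ) * ((M : ℝ)⁻¹ * (pstar j * ∑ a, (c a : ℝ) * A a j / (∑ i, A a i * pstar i))) := by
          field_simp
        rw [← h1] at h4
        exact mul_left_cancel₀ (hps j).ne' (h4.trans (by ring))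
      rw [← Finset.sum_div, hS, div_self hMR.ne']
    -- per-coordinate Jensen
    have per : ∀ j, ∑ a, ((c a : ℝ) * A a j / ℓ a pstar / M) * Real.log (ℓ a pstar / ℓ a p)
        ≤ Real.log (T p j / p j) := by
      intro j
      have hw : ∀ a, 0 ≤ (c a : ℝ) * A a j / ℓ a pstar / M := fun a =>
        div_nonneg (div_nonneg (mul_nonneg (Nat.cast_nonneg _) (hA a j)) (hls a).le) hMR.le
      have hx : ∀ a, 0 < ℓ a pstar / ℓ a p := fun a => div_pos (hls a) (hl a)
      have hj := jensen_log (fun a => (c a : ℝ) * A a j / ℓ a pstar / M)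
        (fun a => ℓ a pstar / ℓ a p) hw (hfixj j) hx
      have hsum : ∑ a, ((c a : ℝ) * A a j / ℓ a pstar / M) * (ℓ a pstar / ℓ a p)
          = T p j / p j := by
        have e1 : ∀ a, ((c a : ℝ) * A a j / ℓ a pstar / M) * (ℓ a pstar / ℓ a p)
            = (M : ℝ)⁻¹ * ((c a : ℝ) * A a j / ℓ a p) := by
          intro a
          have h2 := (hls a).ne'
          have h3 := (hl a).ne'
          field_simp
        rw [Finset.sum_congr rfl fun a _ => e1 a, ← Finset.mul_sum,
          hT p hp hp1 j]
        have := (hp j).ne'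
        field_simp
        ring
      rw [hsum] at hj
      exact hj
    -- multiply by pstar j and sum over j
    have big : ∑ j, pstar j * ∑ a, ((c a : ℝ) * A a j / ℓ a pstar / M) * Real.log (ℓ a pstar / ℓ a p)
        ≤ ∑ j, pstar j * Real.log (T p j / p j) :=
      Finset.sum_le_sum fun j _ => mul_le_mul_of_nonneg_left (per j) (hps j).le
    -- identify the left side
    have lhs : ∑ j, pstar j * ∑ a, ((c a : ℝ) * A a j / ℓ a pstar / M) * Real.log (ℓ a pstar / ℓ a p)
        = (Real.log (L pstar) - Real.log (L p)) / M := by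
      have e1 : ∑ j, pstar j * ∑ a, ((c a : ℝ) * A a j / ℓ a pstar / M) * Real.log (ℓ a pstar / ℓ a p)
          = ∑ j, ∑ a, pstar j * (((c a : ℝ) * A a j / ℓ a pstar / M) * Real.log (ℓ a pstar / ℓ a p)) := by
        exact Finset.sum_congr rfl fun j _ => Finset.mul_sum _ _ _
      have e2 : ∑ j, ∑ a, pstar j * (((c a : ℝ) * A a j / ℓ a pstar / M) * Real.log (ℓ a pstar / ℓ a p))
          = ∑ a, ∑ j, pstar j * (((c a : ℝ) * A a j / ℓ a pstar / M) * Real.log (ℓ a pstar / ℓ a p)) := by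
        exact Finset.sum_comm
      have e3 : ∀ a, ∑ j, pstar j * (((c a : ℝ) * A a j / ℓ a pstar / M) * Real.log (ℓ a pstar / ℓ a p))
          = (c a : ℝ) * (Real.log (ℓ a pstar) - Real.log (ℓ a p)) / M := by
        intro a
        have e4 : ∑ j, pstar j * (((c a : ℝ) * A a j / ℓ a pstar / M) * Real.log (ℓ a pstar / ℓ a p))
            = ((c a : ℝ) / ℓ a pstar / M * Real.log (ℓ a pstar / ℓ a p)) * ∑ j, A a j * pstar j := by
          rw [Finset.mul_sum]
          exact Finset.sum_congr rfl fun j _ => by ring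
        have e5 : ∑ j, A a j * pstar j = ℓ a pstar := rfl
        rw [e4, e5, Real.log_div (hls a).ne' (hl a).ne']
        have h2 := (hls a).ne'
        field_simp
      rw [e1, e2, Finset.sum_congr rfl fun a _ => e3 a, hgl pstar hps, hgl p hp,
        ← Finset.sum_div, ← Finset.sum_sub_distrib]
      congr 1
      exact Finset.sum_congr rfl fun a _ => by ring
    -- identify the right side
    have rhs : ∑ j, pstar j * Real.log (T p j / p j)
        = (∑ j, pstar j * Real.log (pstar j / p j))
          - ∑ j, pstar j * Real.log (pstar j / T p j) := by
      rw [← Finset.sum_sub_distrib]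
      refine Finset.sum_congr rfl fun j _ => ?_
      rw [Real.log_div (hst.1 j).ne' (hp j).ne', Real.log_div (hps j).ne' (hp j).ne',
        Real.log_div (hps j).ne' (hst.1 j).ne']
      ring
    rw [lhs, rhs] at big
    calc Real.log (L pstar) - Real.log (L p)
        = M * ((Real.log (L pstar) - Real.log (L p)) / M) := by
          field_simp
      _ ≤ M * _ := mul_le_mul_of_nonneg_left big hMR.le
  -- the iterates
  set pN : ℕ → (Fin h → ℝ) := fun N => T^[N] p₀ with hpN
  have hPN : ∀ N, (∀ j, 0 < pN N j) ∧ ∑ j, pN N j = 1 := by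
    intro N
    induction N with
    | zero => exact ⟨hp₀, hp₀1⟩
    | succ N ih =>
      have h1 := hstep _ ih.1 ih.2
      have e : pN (N + 1) = T (pN N) := Function.iterate_succ_apply' T N p₀
      rw [e]
      exact h1
  have hsucc : ∀ N, pN (N + 1) = T (pN N) := fun N => Function.iterate_succ_apply' T N p₀
  set D : ℕ → ℝ := fun N => ∑ j, pstar j * Real.log (pstar j / pN N j) with hD
  have hkey : ∀ N, Real.log (L pstar) - Real.log (L (pN N)) ≤ M * (D N - D (N + 1)) := by
    intro N
    have h1 := key (pN N) (hPN N).1 (hPN N).2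
    simp only [hD, hsucc N]
    exact h1
  have hlogle : ∀ N, Real.log (L (pN N)) ≤ Real.log (L pstar) := fun N =>
    Real.log_le_log (hLpos _ (hPN N).1)
      (hmax _ (fun j => ((hPN N).1 j).le) (hPN N).2)
  have hDanti : Antitone D := by
    apply antitone_nat_of_succ_le
    intro N
    have h1 := hkey N
    have h2 := hlogle N
    nlinarith
  have hDnonneg : ∀ N, 0 ≤ D N := fun N =>
    kl_nonneg pstar (pN N) hps (hPN N).1 hps1 (hPN N).2
  have hDtend : Tendsto D atTop (nhds (⨅ N, D N)) :=
    tendsto_atTop_ciInf hDanti ⟨0, fun x ⟨N, hN⟩ => hN ▸ hDnonneg N⟩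
  have hdiff : Tendsto (fun N => D N - D (N + 1)) atTop (nhds 0) := by
    have h1 : Tendsto (fun N => D (N + 1)) atTop (nhds (⨅ N, D N)) :=
      hDtend.comp (tendsto_add_atTop_nat 1)
    simpa using hDtend.sub h1
  have hsq : Tendsto (fun N => Real.log (L pstar) - Real.log (L (pN N))) atTop (nhds 0) := by
    apply squeeze_zero (fun N => by linarith [hlogle N]) (fun N => hkey N)
    simpa using hdiff.const_mul (M : ℝ)
  have hlogtend : Tendsto (fun N => Real.log (L (pN N))) atTop (nhds (Real.log (L pstar))) := by
    have := tendsto_const_nhds (x := Real.log (L pstar)) (f := atTop (α := ℕ)) |>.sub hsq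
    simpa using this
  have hLtend : Tendsto (fun N => L (pN N)) atTop (nhds (L pstar)) := by
    have h1 : Tendsto (fun N => Real.exp (Real.log (L (pN N)))) atTop
        (nhds (Real.exp (Real.log (L pstar)))) :=
      (Real.continuous_exp.continuousAt.tendsto).comp hlogtend
    rw [Real.exp_log (hLpos pstar hps)] at h1
    apply h1.congr
    intro N
    rw [Real.exp_log (hLpos _ (hPN N).1)]
  -- uniqueness of the maximizer
  have huniq : ∀ q : Fin h → ℝ, (∀ j, 0 ≤ q j) → ∑ j, q j = 1 → L q = L pstar → q = pstar := by
    intro q hq hq1 hLq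
    by_contra hne
    have hls : ∀ a, 0 < ℓ a pstar := hApos pstar hps
    obtain ⟨a₀, ha₀c, ha₀⟩ : ∃ a, c a ≠ 0 ∧ ℓ a q ≠ ℓ a pstar := by
      by_contra hc
      push_neg at hc
      exact hne (hsep q pstar hq hq1 (fun j => (hps j).le) hps1 hc)
    set r : Fin h → ℝ := fun j => (q j + pstar j) / 2 with hr
    have hrpos : ∀ j, 0 < r j := fun j => by
      have := hq j; have := hps j
      simp only [hr]; linarith
    have hr1 : ∑ j, r j = 1 := by
      simp only [hr]
      rw [← Finset.sum_div, Finset.sum_add_distrib, hq1, hps1]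
      norm_num
    have hℓr : ∀ a, ℓ a r = (ℓ a q + ℓ a pstar) / 2 := by
      intro a
      simp only [hℓ, hr]
      rw [← Finset.sum_add_distrib, Finset.sum_div]
      exact Finset.sum_congr rfl fun j _ => by ring
    have hlq : ∀ a, 0 ≤ ℓ a q := fun a =>
      Finset.sum_nonneg fun i _ => mul_nonneg (hA a i) (hq i)
    have hlr : ∀ a, 0 < ℓ a r := hApos r hrpos
    have hfac : ∀ a, (ℓ a q * ℓ a pstar) ^ c a ≤ (ℓ a r ^ 2) ^ c a := by
      intro a
      apply pow_le_pow_left₀ (mul_nonneg (hlq a) (hls a).le)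
      rw [hℓr a]
      nlinarith [sq_nonneg (ℓ a q - ℓ a pstar)]
    have hfac0 : (ℓ a₀ q * ℓ a₀ pstar) ^ c a₀ < (ℓ a₀ r ^ 2) ^ c a₀ := by
      apply pow_lt_pow_left₀ _ (mul_nonneg (hlq a₀) (hls a₀).le) ha₀c
      rw [hℓr a₀]
      have hne2 : ℓ a₀ q - ℓ a₀ pstar ≠ 0 := sub_ne_zero_of_ne ha₀
      have hne3 : 0 < (ℓ a₀ q - ℓ a₀ pstar) ^ 2 := by positivity
      nlinarith [hne3]
    classical
    have hprod : ∏ a, (ℓ a q * ℓ a pstar) ^ c a < ∏ a, (ℓ a r ^ 2) ^ c a := by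
      rw [← Finset.mul_prod_erase Finset.univ (fun a => (ℓ a q * ℓ a pstar) ^ c a)
          (Finset.mem_univ a₀),
        ← Finset.mul_prod_erase Finset.univ (fun a => (ℓ a r ^ 2) ^ c a)
          (Finset.mem_univ a₀)]
      have hpe : ∏ a ∈ Finset.univ.erase a₀, (ℓ a q * ℓ a pstar) ^ c a
          ≤ ∏ a ∈ Finset.univ.erase a₀, (ℓ a r ^ 2) ^ c a :=
        Finset.prod_le_prod (fun a _ => pow_nonneg (mul_nonneg (hlq a) (hls a).le) _)
          (fun a _ => hfac a)
      have hpos2 : 0 < ∏ a ∈ Finset.univ.erase a₀, (ℓ a r ^ 2) ^ c a :=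
        Finset.prod_pos fun a _ => pow_pos (pow_pos (hlr a) 2) _
      calc (ℓ a₀ q * ℓ a₀ pstar) ^ c a₀ * ∏ a ∈ Finset.univ.erase a₀, (ℓ a q * ℓ a pstar) ^ c a
          ≤ (ℓ a₀ q * ℓ a₀ pstar) ^ c a₀ * ∏ a ∈ Finset.univ.erase a₀, (ℓ a r ^ 2) ^ c a :=
            mul_le_mul_of_nonneg_left hpe (pow_nonneg (mul_nonneg (hlq a₀) (hls a₀).le) _)
        _ < (ℓ a₀ r ^ 2) ^ c a₀ * ∏ a ∈ Finset.univ.erase a₀, (ℓ a r ^ 2) ^ c a :=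
            mul_lt_mul_of_pos_right hfac0 hpos2
    have hLr2 : L r ^ 2 = ∏ a, (ℓ a r ^ 2) ^ c a := by
      rw [hL, ← Finset.prod_pow]
      exact Finset.prod_congr rfl fun a _ => by ring
    have hLqs : L q * L pstar = ∏ a, (ℓ a q * ℓ a pstar) ^ c a := by
      rw [hL, hL, ← Finset.prod_mul_distrib]
      exact Finset.prod_congr rfl fun a _ => (mul_pow _ _ _).symm
    have h1 : L r ≤ L pstar := hmax r (fun j => (hrpos j).le) hr1
    have h2 : L r ^ 2 ≤ L pstar ^ 2 := by
      apply pow_le_pow_left₀ (hLpos r hrpos).le h1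
    have h3 : L q * L pstar = L pstar ^ 2 := by rw [hLq]; ring
    rw [← hLr2, ← hLqs, h3] at hprod
    linarith
  -- continuity of L
  have hLcont : Continuous L := by
    have hLfun : L = fun p => ∏ a, (∑ i, A a i * p i) ^ c a := funext hL
    rw [hLfun]
    exact continuous_finset_prod _ fun a _ =>
      (continuous_finset_sum _ fun i _ => continuous_const.mul (continuous_apply i)).pow _
  -- compactness of the simplex
  have hΔcomp : IsCompact {q : Fin h → ℝ | (∀ j, 0 ≤ q j) ∧ ∑ j, q j = 1} := by
    have hclosed : IsClosed {q : Fin h → ℝ | (∀ j, 0 ≤ q j) ∧ ∑ j, q j = 1} := by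
      have e : {q : Fin h → ℝ | (∀ j, 0 ≤ q j) ∧ ∑ j, q j = 1}
          = (⋂ j, {q : Fin h → ℝ | 0 ≤ q j}) ∩ {q : Fin h → ℝ | ∑ j, q j = 1} := by
        ext q
        simp [Set.mem_iInter]
      rw [e]
      exact (isClosed_iInter fun j =>
          isClosed_le continuous_const (continuous_apply j)).inter
        (isClosed_eq (continuous_finset_sum _ fun j _ => continuous_apply j) continuous_const)
    have hsub : {q : Fin h → ℝ | (∀ j, 0 ≤ q j) ∧ ∑ j, q j = 1}
        ⊆ Set.pi Set.univ (fun _ : Fin h => Set.Icc (0 : ℝ) 1) := by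
      intro q hq j _
      refine ⟨hq.1 j, ?_⟩
      have h1 := Finset.single_le_sum (f := q) (fun i _ => hq.1 i) (Finset.mem_univ j)
      rw [hq.2] at h1
      exact h1
    exact (isCompact_univ_pi fun _ => isCompact_Icc).of_isClosed_subset hclosed hsub
  -- final topological argument
  apply tendsto_of_subseq_tendsto
  intro ns hns
  obtain ⟨q, hqΔ, ms, hms, hlim⟩ := hΔcomp.tendsto_subseq (x := fun k => pN (ns k))
    (fun k => ⟨fun j => ((hPN (ns k)).1 j).le, (hPN (ns k)).2⟩)
  refine ⟨ms, ?_⟩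
  have hLq1 : Tendsto (fun k => L (pN (ns (ms k)))) atTop (nhds (L q)) :=
    (hLcont.continuousAt.tendsto).comp hlim
  have hLq2 : Tendsto (fun k => L (pN (ns (ms k)))) atTop (nhds (L pstar)) :=
    hLtend.comp (hns.comp hms.tendsto_atTop)
  have hqeq : q = pstar := huniq q hqΔ.1 hqΔ.2 (tendsto_nhds_unique hLq1 hLq2)
  rw [← hqeq]
  exact hlim

/-- If the maximizer `p*` of the likelihood `L` over the simplex `Δ` has all
coordinates positive, then for every starting point `p₀ ∈ Δ°` the EM iterates
`p_{N+1} = T(p_N)` converge to `p*` as `N → ∞`. -/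
theorem stmt6 (h : ℕ) (hh : 1 ≤ h) (w : Fin h → ℝ) (hw : ∀ j, 0 < w j)
    (ξ ζ : Fin h → ℕ) (hξζ : ∀ j, 1 ≤ ξ j + ζ j)
    (m n : ℕ) (hm : m = ∑ j, ξ j) (hn : n = ∑ j, ζ j)
    (L : (Fin h → ℝ) → ℝ)
    (hL : ∀ p, L p = ∏ j, p j ^ ξ j *
      (∑ k ∈ Finset.univ.filter (fun k => j ≤ k), p k / w k) ^ ζ j)
    (T : (Fin h → ℝ) → (Fin h → ℝ))
    (hT : ∀ p : Fin h → ℝ, ((∀ j, 0 < p j) ∧ ∑ j, p j = 1) → ∀ j,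
      T p j = (↑(m + n) : ℝ)⁻¹ *
        ((ξ j : ℝ) + (w j)⁻¹ * p j *
          ∑ k ∈ Finset.univ.filter (fun k => k ≤ j),
            (ζ k : ℝ) / (∑ l ∈ Finset.univ.filter (fun l => k ≤ l), (w l)⁻¹ * p l)))
    (pstar : Fin h → ℝ) (hpstarΔ : (∀ j, 0 ≤ pstar j) ∧ ∑ j, pstar j = 1)
    (hpstarMax : ∀ q : Fin h → ℝ, ((∀ j, 0 ≤ q j) ∧ ∑ j, q j = 1) → L q ≤ L pstar)
    (hpstarPos : ∀ j, 0 < pstar j)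
    (p₀ : Fin h → ℝ) (hp₀ : (∀ j, 0 < p₀ j) ∧ ∑ j, p₀ j = 1) :
    Tendsto (fun N : ℕ => T^[N] p₀) atTop (nhds pstar) := by

  classical
  obtain ⟨hpsnn, hps1⟩ := hpstarΔ
  obtain ⟨hp₀pos, hp₀1⟩ := hp₀
  set A : (Fin h ⊕ Fin h) → Fin h → ℝ :=
    Sum.elim (fun j i => if i = j then (1 : ℝ) else 0)
      (fun j i => if j ≤ i then (w i)⁻¹ else 0) with hA_def
  set c : (Fin h ⊕ Fin h) → ℕ := Sum.elim ξ ζ with hc_def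
  have lin_inl : ∀ (p : Fin h → ℝ) (j : Fin h), ∑ i, A (Sum.inl j) i * p i = p j := by
    intro p j
    simp [hA_def, ite_mul]
  have lin_inr : ∀ (p : Fin h → ℝ) (j : Fin h),
      ∑ i, A (Sum.inr j) i * p i
        = ∑ l ∈ Finset.univ.filter (fun l => j ≤ l), (w l)⁻¹ * p l := by
    intro p j
    rw [Finset.sum_filter]
    simp [hA_def, ite_mul]
  have hA' : ∀ a j, 0 ≤ A a j := by
    rintro (k | k) i
    · simp only [hA_def, Sum.elim_inl]
      split <;> norm_num
    · simp only [hA_def, Sum.elim_inr]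
      split
      · exact inv_nonneg.2 (hw i).le
      · exact le_rfl
  have hM' : ((m + n : ℕ) : ℝ) = ∑ a, (c a : ℝ) := by
    rw [Fintype.sum_sum_type]
    simp only [hc_def, Sum.elim_inl, Sum.elim_inr]
    push_cast [hm, hn]
    ring
  have hM1' : 0 < m + n := by
    have h1 : h ≤ m + n := by
      rw [hm, hn, ← Finset.sum_add_distrib]
      calc h = ∑ _j : Fin h, 1 := by simp
        _ ≤ ∑ j, (ξ j + ζ j) := Finset.sum_le_sum fun j _ => hξζ j
    omega
  have hApos' : ∀ p : Fin h → ℝ, (∀ j, 0 < p j) → ∀ a, 0 < ∑ i, A a i * p i := by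
    intro p hp a
    rcases a with j | j
    · rw [lin_inl]
      exact hp j
    · rw [lin_inr]
      refine Finset.sum_pos' (fun l _ => mul_nonneg (inv_nonneg.2 (hw l).le) (hp l).le) ?_
      exact ⟨j, by simp, mul_pos (inv_pos.2 (hw j)) (hp j)⟩
  have hSpos' : ∀ p : Fin h → ℝ, (∀ j, 0 < p j) → ∀ j,
      0 < ∑ a, (c a : ℝ) * A a j / (∑ i, A a i * p i) := by
    intro p hp j
    refine Finset.sum_pos' (fun a _ =>
      div_nonneg (mul_nonneg (Nat.cast_nonneg _) (hA' a j)) (hApos' p hp a).le) ?_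
    rcases Nat.eq_zero_or_pos (ξ j) with hξ | hξ
    · have hζ : 0 < ζ j := by have := hξζ j; omega
      refine ⟨Sum.inr j, Finset.mem_univ _, ?_⟩
      have e1 : A (Sum.inr j) j = (w j)⁻¹ := by simp [hA_def]
      have e2 : (0 : ℝ) < (c (Sum.inr j) : ℝ) := by
        simp only [hc_def, Sum.elim_inr]
        exact_mod_cast hζ
      exact div_pos (mul_pos e2 (e1 ▸ inv_pos.2 (hw j))) (hApos' p hp _)
    · refine ⟨Sum.inl j, Finset.mem_univ _, ?_⟩
      have e1 : A (Sum.inl j) j = 1 := by simp [hA_def]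
      have e2 : (0 : ℝ) < (c (Sum.inl j) : ℝ) := by
        simp only [hc_def, Sum.elim_inl]
        exact_mod_cast hξ
      exact div_pos (mul_pos e2 (by rw [e1]; norm_num)) (hApos' p hp _)
  have hT' : ∀ p : Fin h → ℝ, (∀ j, 0 < p j) → ∑ j, p j = 1 → ∀ j,
      T p j = ((m + n : ℕ) : ℝ)⁻¹ *
        (p j * ∑ a, (c a : ℝ) * A a j / (∑ i, A a i * p i)) := by
    intro p hp hp1 j
    rw [hT p ⟨hp, hp1⟩ j]
    congr 1
    rw [Fintype.sum_sum_type]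
    have e1 : ∑ k, (c (Sum.inl k) : ℝ) * A (Sum.inl k) j / (∑ i, A (Sum.inl k) i * p i)
        = (ξ j : ℝ) / p j := by
      have e0 : ∀ k, (∑ i, A (Sum.inl k) i * p i) = p k := fun k => lin_inl p k
      simp only [e0]
      simp only [hA_def, hc_def, Sum.elim_inl, mul_ite, mul_one, mul_zero]
      rw [Finset.sum_congr rfl (fun k _ => ite_div ((j : Fin h) = k) ((ξ k : ℝ)) 0 (p k))]
      simp
    have e2 : ∑ k, (c (Sum.inr k) : ℝ) * A (Sum.inr k) j / (∑ i, A (Sum.inr k) i * p i)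
        = ∑ k ∈ Finset.univ.filter (fun k => k ≤ j),
            (ζ k : ℝ) * (w j)⁻¹ / (∑ l ∈ Finset.univ.filter (fun l => k ≤ l), (w l)⁻¹ * p l) := by
      have e0 : ∀ k, (∑ i, A (Sum.inr k) i * p i)
          = ∑ l ∈ Finset.univ.filter (fun l => k ≤ l), (w l)⁻¹ * p l := fun k => lin_inr p k
      rw [Finset.sum_filter]
      refine Finset.sum_congr rfl fun k _ => ?_
      rw [e0, hA_def]
      simp only [Sum.elim_inr, hc_def, mul_ite, mul_zero]
      split
      · rfl
      · simp
    rw [e1, e2, mul_add]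
    congr 1
    · have := (hp j).ne'
      field_simp
    · rw [Finset.mul_sum, Finset.mul_sum]
      refine Finset.sum_congr rfl fun k _ => ?_
      ring
  have hL' : ∀ p : Fin h → ℝ, L p = ∏ a, (∑ i, A a i * p i) ^ c a := by
    intro p
    rw [hL p, Fintype.prod_sum_type, ← Finset.prod_mul_distrib]
    refine Finset.prod_congr rfl fun j _ => ?_
    congr 1
    · rw [lin_inl]
      simp [hc_def]
    · rw [lin_inr]
      simp only [hc_def, Sum.elim_inr]
      congr 1
      exact Finset.sum_congr rfl fun k _ => (div_eq_inv_mul _ _)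
  have hsep' : ∀ q q' : Fin h → ℝ, (∀ j, 0 ≤ q j) → ∑ j, q j = 1 →
      (∀ j, 0 ≤ q' j) → ∑ j, q' j = 1 →
      (∀ a, c a ≠ 0 → (∑ i, A a i * q i) = (∑ i, A a i * q' i)) → q = q' := by
    intro q q' hq hq1 hq' hq'1 heq
    have split : ∀ (p : Fin h → ℝ) (j : Fin h),
        ∑ l ∈ Finset.univ.filter (fun l => j ≤ l), (w l)⁻¹ * p l
          = (w j)⁻¹ * p j + ∑ l ∈ Finset.univ.filter (fun l => j < l), (w l)⁻¹ * p l := by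
      intro p j
      have e : Finset.univ.filter (fun l => j ≤ l)
          = insert j (Finset.univ.filter (fun l => j < l)) := by
        ext l
        simp only [Finset.mem_filter, Finset.mem_univ, true_and, Finset.mem_insert]
        constructor
        · intro hle
          rcases eq_or_lt_of_le hle with h1 | h1
          · exact Or.inl h1.symm
          · exact Or.inr h1
        · rintro (rfl | h1)
          · exact le_rfl
          · exact h1.le
      rw [e, Finset.sum_insert (by simp)]
    have aux : ∀ d : ℕ, ∀ j : Fin h, h - (j : ℕ) ≤ d → q j = q' j := by
      intro d
      induction d with
      | zero =>
        intro j hj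
        exfalso
        have := j.isLt
        omega
      | succ d ih =>
        intro j hj
        have htail : ∀ l : Fin h, j < l → q l = q' l := by
          intro l hl
          apply ih
          have h1 : (j : ℕ) < (l : ℕ) := hl
          have h2 : (l : ℕ) < h := l.isLt
          omega
        rcases Nat.eq_zero_or_pos (ξ j) with hξ | hξ
        · have hζ : ζ j ≠ 0 := by have := hξζ j; omega
          have h1 := heq (Sum.inr j) (by simpa [hc_def] using hζ)
          rw [lin_inr, lin_inr, split q j, split q' j] at h1
          have h2 : ∑ l ∈ Finset.univ.filter (fun l => j < l), (w l)⁻¹ * q l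
              = ∑ l ∈ Finset.univ.filter (fun l => j < l), (w l)⁻¹ * q' l := by
            refine Finset.sum_congr rfl fun l hl => ?_
            rw [htail l (Finset.mem_filter.1 hl).2]
          have h3 : (w j)⁻¹ * q j = (w j)⁻¹ * q' j := by linarith
          exact mul_left_cancel₀ (inv_ne_zero (hw j).ne') h3
        · have h1 := heq (Sum.inl j) (by simpa [hc_def] using hξ.ne')
          rwa [lin_inl, lin_inl] at h1
    funext j
    exact aux h j (by omega)
  exact em_abstract A hA' c (m + n) hM' hM1' hApos' hSpos' T hT' L hL' hsep'
    pstar hpstarPos hps1 (fun q h1 h2 => hpstarMax q ⟨h1, h2⟩) p₀ hp₀pos hp₀1
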